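/- Let R⁽¹⁾,…,R⁽ⁿ⁾ ∈ SO(3), n ≥ 3, with rows r₁⁽ⁱ⁾, r₂⁽ⁱ⁾, r₃⁽ⁱ⁾. Define the 2n×n block matrix A with 2×1 blocks a_{ij} = (⟨r₁⁽ⁱ⁾, r₃⁽ⁱ⁾ × r₃⁽ʲ⁾⟩, ⟨r₂⁽ⁱ⁾, r₃⁽ⁱ⁾ × r₃⁽ʲ⁾⟩)ᵀ for i ≠ j and a_{ii} = 0. Then A factors as A = B Cᵀ where B ∈ ℝ^{2n×3} has i-th row pair (-r₂⁽ⁱ⁾ᵀ ; r₁⁽ⁱ⁾ᵀ) and C ∈ ℝ^{n×3} has i-th row r₃⁽ⁱ⁾ᵀ. In particular rank(A) ≤ 3. -/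

import Mathlib

open Matrix

/-- The pure common lines matrix of rotations `R⁽¹⁾,…,R⁽ⁿ⁾`: a `2n × n` matrix
(rows indexed by `Fin n × Fin 2`) whose `2×1` block at `(i,j)`, `i ≠ j`, is
`(⟨r₁⁽ⁱ⁾, r₃⁽ⁱ⁾ × r₃⁽ʲ⁾⟩, ⟨r₂⁽ⁱ⁾, r₃⁽ⁱ⁾ × r₃⁽ʲ⁾⟩)ᵀ`, and `0` on the diagonal. -/
def pureCLM {n : ℕ} (R : Fin n → Matrix (Fin 3) (Fin 3) ℝ) :
    Matrix (Fin n × Fin 2) (Fin n) ℝ :=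
  Matrix.of fun p j =>
    if p.1 = j then 0
    else (R p.1) p.2.castSucc ⬝ᵥ (crossProduct ((R p.1) 2) ((R j) 2))

lemma adj_eq_transpose (A : Matrix (Fin 3) (Fin 3) ℝ)
    (h : A ∈ Matrix.specialOrthogonalGroup (Fin 3) ℝ) : adjugate A = Aᵀ := by
  rw [Matrix.mem_specialOrthogonalGroup_iff] at h
  obtain ⟨h1, h2⟩ := h
  rw [Matrix.mem_orthogonalGroup_iff'] at h1
  have h1' : Aᵀ * A = 1 := by simpa [Matrix.star_eq_conjTranspose] using h1
  calc adjugate A = (Aᵀ * A) * adjugate A := by rw [h1', one_mul]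
    _ = Aᵀ * (A * adjugate A) := by rw [Matrix.mul_assoc]
    _ = Aᵀ := by rw [Matrix.mul_adjugate, h2, one_smul, Matrix.mul_one]

/-- The pure common lines matrix factors as `A = B Cᵀ`, where `B` stacks the row
pairs `(-r₂⁽ⁱ⁾ᵀ ; r₁⁽ⁱ⁾ᵀ)` and `C` has rows `r₃⁽ⁱ⁾ᵀ`; hence `rank A ≤ 3`. -/
theorem stmt1 {n : ℕ} (hn : 3 ≤ n) (R : Fin n → Matrix (Fin 3) (Fin 3) ℝ)
    (hR : ∀ i, R i ∈ Matrix.specialOrthogonalGroup (Fin 3) ℝ) :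
    pureCLM R =
      (Matrix.of fun (p : Fin n × Fin 2) (k : Fin 3) =>
        if p.2 = 0 then -((R p.1) 1 k) else (R p.1) 0 k) *
      (Matrix.of fun (i : Fin n) (k : Fin 3) => (R i) 2 k)ᵀ ∧
    (pureCLM R).rank ≤ 3 := by
  have key : pureCLM R =
      (Matrix.of fun (p : Fin n × Fin 2) (k : Fin 3) =>
        if p.2 = 0 then -((R p.1) 1 k) else (R p.1) 0 k) *
      (Matrix.of fun (i : Fin n) (k : Fin 3) => (R i) 2 k)ᵀ := by
    ext ⟨i, s⟩ j
    have hadj := adj_eq_transpose (R i) (hR i)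
    rw [adjugate_fin_three] at hadj
    -- components of r₂ = r₃ × r₁ (i.e. r₁ × r₃ = -r₂)
    have e10 := congrFun (congrFun hadj 0) 1
    have e11 := congrFun (congrFun hadj 1) 1
    have e12 := congrFun (congrFun hadj 2) 1
    -- components of r₁ = r₂ × r₃
    have e00 := congrFun (congrFun hadj 0) 0
    have e01 := congrFun (congrFun hadj 1) 0
    have e02 := congrFun (congrFun hadj 2) 0
    simp [Matrix.cons_val_fin_one, transpose_apply] at e10 e11 e12 e00 e01 e02
    simp only [pureCLM, Matrix.mul_apply, Matrix.of_apply, transpose_apply,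
      dotProduct, crossProduct, Fin.sum_univ_three]
    fin_cases s <;> simp only [Fin.isValue, Fin.castSucc_zero, Fin.castSucc_one] <;> norm_num <;>
      [skip; skip] <;> split_ifs with h
    · subst h
      linear_combination (-(R i 2 0)) * e10 + (-(R i 2 1)) * e11 + (-(R i 2 2)) * e12
    · simp only [Matrix.cons_val_two, Matrix.tail_cons, Matrix.head_cons]
      linear_combination (-(R j 2 0)) * e10 + (-(R j 2 1)) * e11 + (-(R j 2 2)) * e12
    · subst h
      linear_combination (R i 2 0) * e00 + (R i 2 1) * e01 + (R i 2 2) * e02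
    · simp only [Matrix.cons_val_two, Matrix.tail_cons, Matrix.head_cons]
      linear_combination (R j 2 0) * e00 + (R j 2 1) * e01 + (R j 2 2) * e02
  refine ⟨key, ?_⟩
  rw [key]
  calc ((Matrix.of fun (p : Fin n × Fin 2) (k : Fin 3) =>
        if p.2 = 0 then -((R p.1) 1 k) else (R p.1) 0 k) *
      (Matrix.of fun (i : Fin n) (k : Fin 3) => (R i) 2 k)ᵀ).rank
      ≤ (Matrix.of fun (p : Fin n × Fin 2) (k : Fin 3) =>
        if p.2 = 0 then -((R p.1) 1 k) else (R p.1) 0 k).rank := Matrix.rank_mul_le_left _ _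
    _ ≤ 3 := by simpa using Matrix.rank_le_card_width (Matrix.of fun (p : Fin n × Fin 2) (k : Fin 3) =>
        if p.2 = 0 then -((R p.1) 1 k) else (R p.1) 0 k)
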